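/- Let |u⟩ and |v⟩ be unit vectors in ℂ^d with a = |⟨u|v⟩|² < 1, and let M = (3/8)|u⟩⟨u| + (1/8)|v⟩⟨v|. Let λ₁ > λ₂ > 0 denote the two nonzero eigenvalues of M (which satisfy λ₁ − λ₂ = √(1/16 + 3a/16) ≥ 1/4), and let |φ₁⟩ be a unit eigenvector of M for λ₁. Then λ₁ ≤ 3/8 + 3a/16, λ₂ ≥ 1/8 − 3a/16, and |⟨u|φ₁⟩|² ≥ 1 − 3a/4. -/

import Mathlib

open Matrix

/-- The outer product `|u⟩⟨v|`, with entries `u i * conj (v j)`. -/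
noncomputable def outer {m n : Type*} (u : m → ℂ) (v : n → ℂ) : Matrix m n ℂ :=
  Matrix.vecMulVec u (star v)

lemma outer_mulVec {d : ℕ} (u v φ : Fin d → ℂ) :
    outer u v *ᵥ φ = (star v ⬝ᵥ φ) • u := by
  ext i
  simp [outer, Matrix.mulVec, Matrix.vecMulVec_apply, dotProduct, Finset.mul_sum,
    Finset.sum_mul, mul_comm, mul_assoc, mul_left_comm]

lemma conj_dot {d : ℕ} (u v : Fin d → ℂ) :
    star v ⬝ᵥ u = (starRingEnd ℂ) (star u ⬝ᵥ v) := by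
  simp [dotProduct, map_sum, mul_comm]

lemma eigen_eqs {d : ℕ} (u v φ : Fin d → ℂ) (hu : star u ⬝ᵥ u = 1) (hv : star v ⬝ᵥ v = 1)
    (lam : ℝ)
    (heig : ((3 / 8 : ℂ) • outer u u + (1 / 8 : ℂ) • outer v v) *ᵥ φ = (lam : ℂ) • φ) :
    (3/8 : ℂ) * (star u ⬝ᵥ φ) + (1/8) * ((star u ⬝ᵥ v) * (star v ⬝ᵥ φ)) = lam * (star u ⬝ᵥ φ) ∧
    (3/8 : ℂ) * ((starRingEnd ℂ) (star u ⬝ᵥ v) * (star u ⬝ᵥ φ)) + (1/8) * (star v ⬝ᵥ φ)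
      = lam * (star v ⬝ᵥ φ) := by
  have h1 := congrArg (fun z => star u ⬝ᵥ z) heig
  have h2 := congrArg (fun z => star v ⬝ᵥ z) heig
  simp only [Matrix.add_mulVec, Matrix.smul_mulVec, outer_mulVec, dotProduct_add,
    dotProduct_smul, smul_eq_mul, hu, hv, mul_one] at h1 h2
  constructor
  · rw [← h1]; ring
  · rw [conj_dot u v] at h2; rw [← h2]; ring

lemma char_eq (lam a : ℝ) (c x y : ℂ) (hac : (a : ℂ) = c * (starRingEnd ℂ) c)
    (hE1 : (3/8 : ℂ) * x + (1/8) * (c * y) = lam * x)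
    (hE2 : (3/8 : ℂ) * ((starRingEnd ℂ) c * x) + (1/8) * y = lam * y)
    (hxy : x ≠ 0 ∨ y ≠ 0) :
    lam ^ 2 - lam / 2 + 3 * (1 - a) / 64 = 0 := by
  have h1 : (((lam : ℂ) - 3/8) * ((lam : ℂ) - 1/8) - 3 * a / 64) * x = 0 := by
    linear_combination (-(lam : ℂ) + 1/8) * hE1 - (c/8) * hE2 - (3*x/64) * hac
  have h2 : (((lam : ℂ) - 3/8) * ((lam : ℂ) - 1/8) - 3 * a / 64) * y = 0 := by
    linear_combination (-(lam : ℂ) + 3/8) * hE2 - (3 * (starRingEnd ℂ) c / 8) * hE1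
      - (3*y/64) * hac
  have hz : ((lam : ℂ) - 3/8) * ((lam : ℂ) - 1/8) - 3 * a / 64 = 0 := by
    rcases hxy with hx | hy
    · exact (mul_eq_zero.mp h1).resolve_right hx
    · exact (mul_eq_zero.mp h2).resolve_right hy
  have : ((lam ^ 2 - lam / 2 + 3 * (1 - a) / 64 : ℝ) : ℂ) = 0 := by
    push_cast
    linear_combination hz
  exact_mod_cast this

lemma diff_bound (D a : ℝ) (h : D ^ 2 = 1/16 + 3*a/16) (h0 : 0 < D) (ha : 0 ≤ a) :
    1/4 ≤ D ∧ D ≤ 1/4 + 3*a/8 := by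
  constructor
  · nlinarith [h, h0, ha]
  · nlinarith [h, h0, ha, sq_nonneg a, sq_nonneg (D - 1/4 - 3*a/8)]

lemma final_bound (lam1 X Y a : ℝ) (hnorm : lam1 = 3*X/8 + Y/8)
    (habs2 : (lam1 - 1/8)^2 * Y = 9*a*X/64) (hXnn : 0 ≤ X) (hYnn : 0 ≤ Y)
    (ha0 : 0 ≤ a) (hl : 3/8 ≤ lam1) : 1 - 3*a/4 ≤ X := by
  have hY94 : Y ≤ 9 * a * X / 4 := by
    nlinarith [habs2, mul_nonneg hYnn (by nlinarith : (0:ℝ) ≤ (lam1 - 1/8)^2 - 1/16)]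
  nlinarith [hnorm, hY94, hXnn, ha0, mul_nonneg ha0 hXnn, sq_nonneg a]

set_option maxHeartbeats 1000000 in
/-- Let `u, v` be unit vectors in `ℂ^d` with `a = |⟨u|v⟩|² < 1`, and
`M = (3/8)|u⟩⟨u| + (1/8)|v⟩⟨v|`.  Let `λ₁ > λ₂ > 0` be the two nonzero eigenvalues of `M`
(with `φ₁` a unit eigenvector for `λ₁` and `w ≠ 0` an eigenvector for `λ₂`).  Then
`λ₁ − λ₂ = √(1/16 + 3a/16) ≥ 1/4`, `λ₁ ≤ 3/8 + 3a/16`, `λ₂ ≥ 1/8 − 3a/16`, and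
`|⟨u|φ₁⟩|² ≥ 1 − 3a/4`. -/
theorem two_state_principal_component {d : ℕ} (u v : Fin d → ℂ)
    (hu : star u ⬝ᵥ u = 1) (hv : star v ⬝ᵥ v = 1)
    (a : ℝ) (ha : a = ‖star u ⬝ᵥ v‖ ^ 2) (ha1 : a < 1)
    (lam1 lam2 : ℝ) (hord : lam2 < lam1) (h2pos : 0 < lam2)
    (φ1 : Fin d → ℂ) (hφ1 : star φ1 ⬝ᵥ φ1 = 1)
    (heig1 : ((3 / 8 : ℂ) • outer u u + (1 / 8 : ℂ) • outer v v) *ᵥ φ1 = (lam1 : ℂ) • φ1)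
    (w : Fin d → ℂ) (hw : w ≠ 0)
    (heig2 : ((3 / 8 : ℂ) • outer u u + (1 / 8 : ℂ) • outer v v) *ᵥ w = (lam2 : ℂ) • w) :
    lam1 - lam2 = Real.sqrt (1 / 16 + 3 * a / 16) ∧
    1 / 4 ≤ lam1 - lam2 ∧
    lam1 ≤ 3 / 8 + 3 * a / 16 ∧
    1 / 8 - 3 * a / 16 ≤ lam2 ∧
    1 - 3 * a / 4 ≤ ‖star u ⬝ᵥ φ1‖ ^ 2 := by
  set c : ℂ := star u ⬝ᵥ v with hc
  have ha0 : 0 ≤ a := ha ▸ sq_nonneg _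
  have hac : (a : ℂ) = c * (starRingEnd ℂ) c := by
    rw [ha, Complex.mul_conj']
    norm_cast
  obtain ⟨hE1, hE2⟩ := eigen_eqs u v φ1 hu hv lam1 heig1
  obtain ⟨hF1, hF2⟩ := eigen_eqs u v w hu hv lam2 heig2
  set x : ℂ := star u ⬝ᵥ φ1 with hx
  set y : ℂ := star v ⬝ᵥ φ1 with hy
  have hφ1ne : φ1 ≠ 0 := by
    intro h
    rw [h] at hφ1
    simp at hφ1
  have hxy1 : x ≠ 0 ∨ y ≠ 0 := by
    by_contra h
    push_neg at h
    obtain ⟨h1, h2⟩ := h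
    have : ((lam1 : ℂ)) • φ1 = 0 := by
      rw [← heig1, Matrix.add_mulVec, Matrix.smul_mulVec, Matrix.smul_mulVec,
        outer_mulVec, outer_mulVec, ← hx, ← hy, h1, h2]
      simp
    rcases smul_eq_zero.mp this with h | h
    · have : lam1 = 0 := by exact_mod_cast h
      linarith
    · exact hφ1ne h
  have hxy2 : (star u ⬝ᵥ w) ≠ 0 ∨ (star v ⬝ᵥ w) ≠ 0 := by
    by_contra h
    push_neg at h
    obtain ⟨h1, h2⟩ := h
    have : ((lam2 : ℂ)) • w = 0 := by
      rw [← heig2, Matrix.add_mulVec, Matrix.smul_mulVec, Matrix.smul_mulVec,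
        outer_mulVec, outer_mulVec, h1, h2]
      simp
    rcases smul_eq_zero.mp this with h | h
    · have : lam2 = 0 := by exact_mod_cast h
      linarith
    · exact hw h
  have hchar1 := char_eq lam1 a c x y hac hE1 hE2 hxy1
  have hchar2 := char_eq lam2 a c (star u ⬝ᵥ w) (star v ⬝ᵥ w) hac hF1 hF2 hxy2
  have hkey : (lam1 - lam2) * (lam1 + lam2 - 1/2) = 0 := by
    linear_combination hchar1 - hchar2
  have hsum : lam1 + lam2 = 1/2 := by
    rcases mul_eq_zero.mp hkey with h | h
    · linarith
    · linarith
  have hprod : lam1 * lam2 = 3 * (1 - a) / 64 := by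
    linear_combination lam1 * hsum - hchar1
  have hsq : (lam1 - lam2) ^ 2 = 1 / 16 + 3 * a / 16 := by
    linear_combination (lam1 + lam2 + 1/2) * hsum - 4 * hprod
  have hD0 : 0 < lam1 - lam2 := by linarith
  obtain ⟨part2, hDub⟩ := diff_bound (lam1 - lam2) a hsq hD0 ha0
  have part1 : lam1 - lam2 = Real.sqrt (1 / 16 + 3 * a / 16) := by
    rw [← hsq, Real.sqrt_sq hD0.le]
  have part3 : lam1 ≤ 3 / 8 + 3 * a / 16 := by linarith
  have part4 : 1 / 8 - 3 * a / 16 ≤ lam2 := by linarith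
  have hlam138 : 3/8 ≤ lam1 := by linarith
  set X : ℝ := ‖x‖ ^ 2 with hX
  set Y : ℝ := ‖y‖ ^ 2 with hY
  have hXnn : 0 ≤ X := sq_nonneg _
  have hYnn : 0 ≤ Y := sq_nonneg _
  have hnorm : lam1 = 3 * X / 8 + Y / 8 := by
    have h := congrArg (fun z => star φ1 ⬝ᵥ z) heig1
    simp only [Matrix.add_mulVec, Matrix.smul_mulVec, outer_mulVec, dotProduct_add,
      dotProduct_smul, smul_eq_mul, hφ1, mul_one] at h
    have hu' : star φ1 ⬝ᵥ u = (starRingEnd ℂ) x := by rw [hx, conj_dot]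
    have hv' : star φ1 ⬝ᵥ v = (starRingEnd ℂ) y := by rw [hy, conj_dot]
    rw [hu', hv'] at h
    have hXc : (X : ℂ) = x * (starRingEnd ℂ) x := by
      rw [hX, Complex.mul_conj']; norm_cast
    have hYc : (Y : ℂ) = y * (starRingEnd ℂ) y := by
      rw [hY, Complex.mul_conj']; norm_cast
    have : ((lam1 : ℂ)) = 3 * X / 8 + Y / 8 := by
      rw [hXc, hYc]; rw [← hx, ← hy] at h; linear_combination -h
    exact_mod_cast this
  have hG2 : ((lam1 : ℂ) - 1/8) * y = (3/8) * ((starRingEnd ℂ) c * x) := by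
    linear_combination -hE2
  have habs2 : (lam1 - 1/8) ^ 2 * Y = 9 * a * X / 64 := by
    have h := congrArg (fun z => ‖z‖ ^ 2) hG2
    have h1 : ‖(lam1 : ℂ) - 1/8‖ = lam1 - 1/8 := by
      have h2 : ((lam1 : ℂ) - 1/8) = ((lam1 - 1/8 : ℝ) : ℂ) := by push_cast; ring
      rw [h2, Complex.norm_real, Real.norm_eq_abs, abs_of_nonneg (by linarith)]
    simp only [norm_mul, mul_pow, norm_div, Complex.norm_conj, h1,
      Complex.norm_ofNat] at h
    rw [hY, hX, ha, hc]
    nlinarith [h]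
  exact ⟨part1, part2, part3, part4, final_bound lam1 X Y a hnorm habs2 hXnn hYnn ha0 hlam138⟩
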